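/- Let H = (V, E) be a hypergraph and v ∈ V with {v} ∉ E. Then I(H;x) = I(H⊖v;x) + x·I(H∼v;x), where H⊖v is the hypergraph obtained by deleting v together with all hyperedges containing v, and H∼v is obtained by removing v from the vertex set and from every hyperedge containing it. -/

import Mathlib

open Polynomial

/-- The independence polynomial of the hypergraph with vertex set `V` and
hyperedge set `E`: the sum of `x^|W|` over all subsets `W ⊆ V` containing no hyperedge. -/
noncomputable def indPoly (V : Finset ℕ) (E : Finset (Finset ℕ)) : Polynomial ℤ :=
  ∑ W ∈ V.powerset.filter (fun W => ∀ e ∈ E, ¬ e ⊆ W), X ^ W.card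

theorem stmt_14 (V : Finset ℕ) (E : Finset (Finset ℕ)) (v : ℕ) (hv : v ∈ V)
    (hE : ∀ e ∈ E, e ⊆ V) (hne : ∀ e ∈ E, e.Nonempty) (hv1 : ({v} : Finset ℕ) ∉ E) :
    indPoly V E =
      indPoly (V.erase v) (E.filter (fun e => v ∉ e)) +
        X * indPoly (V.erase v) (E.image (fun e => e.erase v)) := by
  classical
  rw [indPoly, ← Finset.sum_filter_add_sum_filter_not _ (fun W => v ∉ W)]
  congr 1
  · -- sets not containing v
    rw [indPoly]
    apply Finset.sum_congr _ (fun _ _ => rfl)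
    ext W
    simp only [Finset.mem_filter, Finset.mem_powerset, Finset.subset_erase]
    constructor
    · rintro ⟨⟨hWV, hind⟩, hvW⟩
      exact ⟨⟨hWV, hvW⟩, fun e he hsub => hind e he.1 hsub⟩
    · rintro ⟨⟨hWV, hvW⟩, hind⟩
      refine ⟨⟨hWV, fun e he hsub => ?_⟩, hvW⟩
      by_cases hvE : v ∈ e
      · exact hvW (hsub hvE)
      · exact hind e ⟨he, hvE⟩ hsub
  · -- sets containing v
    rw [indPoly, Finset.mul_sum]
    refine Finset.sum_bij' (fun W _ => W.erase v) (fun W _ => insert v W) ?_ ?_ ?_ ?_ ?_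
    · intro W hW
      simp only [Finset.mem_filter, Finset.mem_powerset, not_not] at hW
      obtain ⟨⟨hWV, hind⟩, hvW⟩ := hW
      simp only [Finset.mem_filter, Finset.mem_powerset]
      constructor
      · exact Finset.erase_subset_erase v hWV
      · intro e' he'
        simp only [Finset.mem_image] at he'
        obtain ⟨e, he, rfl⟩ := he'
        intro hsub
        apply hind e he
        rw [← Finset.insert_erase hvW]
        exact Finset.subset_insert_iff.mpr hsub
    · intro W hW
      simp only [Finset.mem_filter, Finset.mem_powerset] at hW
      obtain ⟨hWV, hind⟩ := hW
      rw [Finset.subset_erase] at hWV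
      simp only [Finset.mem_filter, Finset.mem_powerset, not_not]
      refine ⟨⟨Finset.insert_subset hv hWV.1, fun e he hsub => ?_⟩, Finset.mem_insert_self _ _⟩
      refine hind (e.erase v) (Finset.mem_image_of_mem _ he) ?_
      exact Finset.subset_insert_iff.mp hsub
    · intro W hW
      simp only [Finset.mem_filter, not_not] at hW
      exact Finset.insert_erase hW.2
    · intro W hW
      simp only [Finset.mem_filter, Finset.mem_powerset, Finset.subset_erase] at hW
      exact Finset.erase_insert hW.1.2
    · intro W hW
      simp only [Finset.mem_filter, not_not] at hW
      show X ^ W.card = X * X ^ (W.erase v).card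
      rw [← Finset.insert_erase hW.2, Finset.card_insert_of_notMem (Finset.notMem_erase _ _),
        Finset.erase_insert (Finset.notMem_erase _ _), pow_succ, mul_comm]
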